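/- If f : (0,∞) → ℝ is strictly convex, then the function g(α) := α · f(1/α) is also strictly convex on (0,∞). -/

import Mathlib

/-- If `f` is strictly convex on `(0, ∞)`, then `g(α) := α * f (1/α)` is also
strictly convex on `(0, ∞)`. -/
theorem strictConvexOn_smul_inv_comp (f : ℝ → ℝ)
    (hf : StrictConvexOn ℝ (Set.Ioi (0 : ℝ)) f) :
    StrictConvexOn ℝ (Set.Ioi (0 : ℝ)) (fun α => α * f (1 / α)) := by
  constructor
  · exact convex_Ioi 0
  · intro x hx y hy hxy a b ha hb hab
    simp only [smul_eq_mul]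
    set z := a * x + b * y with hz
    have hx0 : (0:ℝ) < x := hx
    have hy0 : (0:ℝ) < y := hy
    have hz0 : (0:ℝ) < z := by positivity
    have hxinv : (1:ℝ)/x ∈ Set.Ioi (0:ℝ) := by simpa using one_div_pos.mpr hx0
    have hyinv : (1:ℝ)/y ∈ Set.Ioi (0:ℝ) := by simpa using one_div_pos.mpr hy0
    have hne : (1:ℝ)/x ≠ 1/y := by
      simp only [one_div]
      exact fun h => hxy (by rwa [inv_inj] at h)
    have ha' : (0:ℝ) < a * x / z := by positivity
    have hb' : (0:ℝ) < b * y / z := by positivity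
    have hab' : a * x / z + b * y / z = 1 := by field_simp; exact hz.symm
    have key := hf.2 hxinv hyinv hne ha' hb' hab'
    have harg : (a * x / z) • ((1:ℝ)/x) + (b * y / z) • ((1:ℝ)/y) = 1 / z := by
      have : (a * x / z) • ((1:ℝ)/x) + (b * y / z) • ((1:ℝ)/y) = (a + b) / z := by
        simp only [smul_eq_mul]; field_simp
      rw [this, hab]
    rw [harg] at key
    simp only [smul_eq_mul] at key
    have := mul_lt_mul_of_pos_left key hz0
    calc z * f (1 / z) < z * (a * x / z * f (1/x) + b * y / z * f (1/y)) := this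
      _ = a * (x * f (1/x)) + b * (y * f (1/y)) := by field_simp
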